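/- The function A_α(σa,σb) defined for positive reals σa ≠ σb and α > 0, α ≠ 1 by A_α(σa,σb) = α / G_{α,α}(σa,σb) with G_{α,α}(σa,σb) = (α/(1−α))·(σa^{(1−α)/α} − σb^{(1−α)/α})/(σa^{1/α} − σb^{1/α}), satisfies min(σa,σb) ≤ A_α(σa,σb) ≤ max(σa,σb). -/

import Mathlib

open intervalIntegral Real

private lemma rpow_integrable (y x r : ℝ) (hy : 0 < y) (hxy : y ≤ x) :
    IntervalIntegrable (fun t : ℝ => t ^ r) MeasureTheory.volume y x := by
  apply ContinuousOn.intervalIntegrable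
  apply ContinuousOn.rpow_const continuousOn_id
  intro t ht
  rw [Set.uIcc_of_le hxy] at ht
  exact Or.inl (ne_of_gt (lt_of_lt_of_le hy ht.1))

private lemma int_rpow_eq (y x r : ℝ) (hy : 0 < y) (hxy : y < x) (hr : r ≠ 0) :
    ∫ t in y..x, t ^ (r - 1) = (x ^ r - y ^ r) / r := by
  have h0 : (0 : ℝ) ∉ Set.uIcc y x := by
    rw [Set.uIcc_of_le hxy.le]
    intro h
    exact absurd h.1 (not_le.mpr hy)
  have := integral_rpow (a := y) (b := x) (r := r - 1)
    (Or.inr ⟨by intro h; exact hr (by linarith), h0⟩)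
  simpa using this

private lemma int_rpow_pos (y x r : ℝ) (hy : 0 < y) (hxy : y < x) :
    0 < ∫ t in y..x, t ^ r := by
  apply intervalIntegral_pos_of_pos_on (rpow_integrable y x r hy hxy.le) _ hxy
  intro t ht
  exact Real.rpow_pos_of_pos (lt_trans hy ht.1) r

private lemma core_upper (y x p : ℝ) (hy : 0 < y) (hxy : y < x) :
    (∫ t in y..x, t ^ p) ≤ x * ∫ t in y..x, t ^ (p - 1) := by
  rw [← integral_const_mul]
  apply integral_mono_on hxy.le (rpow_integrable y x p hy hxy.le)
    ((rpow_integrable y x (p - 1) hy hxy.le).const_mul x)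
  intro t ht
  have ht0 : 0 < t := lt_of_lt_of_le hy ht.1
  have h1 : t ^ p = t ^ (p - 1) * t := by
    rw [← Real.rpow_add_one ht0.ne' (p - 1), sub_add_cancel]
  rw [h1, mul_comm (x : ℝ)]
  exact mul_le_mul_of_nonneg_left ht.2 (Real.rpow_nonneg ht0.le _)

private lemma core_lower (y x p : ℝ) (hy : 0 < y) (hxy : y < x) :
    y * (∫ t in y..x, t ^ (p - 1)) ≤ ∫ t in y..x, t ^ p := by
  rw [← integral_const_mul]
  apply integral_mono_on hxy.le ((rpow_integrable y x (p - 1) hy hxy.le).const_mul y)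
    (rpow_integrable y x p hy hxy.le)
  intro t ht
  have ht0 : 0 < t := lt_of_lt_of_le hy ht.1
  have h1 : t ^ p = t ^ (p - 1) * t := by
    rw [← Real.rpow_add_one ht0.ne' (p - 1), sub_add_cancel]
  rw [h1, mul_comm (y : ℝ)]
  exact mul_le_mul_of_nonneg_left ht.1 (Real.rpow_nonneg ht0.le _)

private lemma A_mean_aux (y x α : ℝ) (hy : 0 < y) (hxy : y < x)
    (hα : 0 < α) (hα1 : α ≠ 1) :
    y ≤ α / ((α / (1 - α)) * ((x ^ ((1 - α) / α) - y ^ ((1 - α) / α)) / (x ^ (1 / α) - y ^ (1 / α)))) ∧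
    α / ((α / (1 - α)) * ((x ^ ((1 - α) / α) - y ^ ((1 - α) / α)) / (x ^ (1 / α) - y ^ (1 / α)))) ≤ x := by
  have hα0 : α ≠ 0 := hα.ne'
  have h1α : 1 - α ≠ 0 := sub_ne_zero.mpr (Ne.symm hα1)
  set p : ℝ := (1 - α) / α with hpdef
  set q : ℝ := 1 / α with hqdef
  have hp0 : p ≠ 0 := div_ne_zero h1α hα0
  have hq0 : q ≠ 0 := one_div_ne_zero hα0
  have hqp : q - 1 = p := by rw [hpdef, hqdef, div_sub_one hα0]
  set N : ℝ := x ^ p - y ^ p with hNdef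
  set D : ℝ := x ^ q - y ^ q with hDdef
  have hIp : ∫ t in y..x, t ^ (p - 1) = N / p := int_rpow_eq y x p hy hxy hp0
  have hIq : ∫ t in y..x, t ^ p = D / q := by
    rw [← hqp]; exact int_rpow_eq y x q hy hxy hq0
  have hNp : 0 < N / p := hIp ▸ int_rpow_pos y x (p - 1) hy hxy
  have hDq : 0 < D / q := hIq ▸ int_rpow_pos y x p hy hxy
  have hupper : D / q ≤ x * (N / p) := by
    rw [← hIp, ← hIq]; exact core_upper y x p hy hxy
  have hlower : y * (N / p) ≤ D / q := by
    rw [← hIp, ← hIq]; exact core_lower y x p hy hxy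
  have hN : N ≠ 0 := by
    intro h; rw [h, zero_div] at hNp; exact lt_irrefl 0 hNp
  have hD : D ≠ 0 := by
    intro h; rw [h, zero_div] at hDq; exact lt_irrefl 0 hDq
  have hE : α / ((α / (1 - α)) * (N / D)) = (D / q) / (N / p) := by
    rw [hpdef, hqdef]
    field_simp
  rw [hE]
  constructor
  · rw [le_div_iff₀ hNp]; exact hlower
  · rw [div_le_iff₀ hNp]; exact hupper

theorem A_mean (σa σb α : ℝ) (ha : 0 < σa) (hb : 0 < σb) (hab : σa ≠ σb)
    (hα : 0 < α) (hα1 : α ≠ 1) :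
    min σa σb ≤
        α / ((α / (1 - α)) *
          ((σa ^ ((1 - α) / α) - σb ^ ((1 - α) / α)) / (σa ^ (1 / α) - σb ^ (1 / α)))) ∧
      α / ((α / (1 - α)) *
          ((σa ^ ((1 - α) / α) - σb ^ ((1 - α) / α)) / (σa ^ (1 / α) - σb ^ (1 / α)))) ≤
        max σa σb := by
  rcases lt_or_gt_of_ne hab with h | h
  · have hswap : (σa ^ ((1 - α) / α) - σb ^ ((1 - α) / α)) / (σa ^ (1 / α) - σb ^ (1 / α))
        = (σb ^ ((1 - α) / α) - σa ^ ((1 - α) / α)) / (σb ^ (1 / α) - σa ^ (1 / α)) := by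
      rw [← neg_sub (σb ^ ((1 - α) / α)), ← neg_sub (σb ^ (1 / α)), neg_div_neg_eq]
    rw [hswap, min_eq_left h.le, max_eq_right h.le]
    exact A_mean_aux σa σb α ha h hα hα1
  · rw [min_eq_right h.le, max_eq_left h.le]
    exact A_mean_aux σb σa α hb h hα hα1
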